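/- Let f : ℝ^n → ℝ be convex with subgradients g_t ∈ ∂f at points p_{t-1} in the probability simplex I, and let the mirror descent update p_t minimize g_tᵀ(p - p_{t-1}) + α·D(p ‖ p_{t-1}) over I, where D is KL divergence and p₀ = (1/n,…,1/n). Then for each t: g_tᵀ(p_t - p_{t-1}) + α·D(p_t ‖ p_{t-1}) ≥ -‖g_t‖_∞²/(2α). -/

import Mathlib

open Finset


private lemma hG_deriv (t : ℝ) (ht : 0 < t) :
    HasDerivAt (fun s : ℝ => (s+1) * Real.log s - 2*s + 2)
      (Real.log t + 1/t - 1) t := by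
  have h1 : HasDerivAt (fun s : ℝ => (s+1) * Real.log s)
      (1 * Real.log t + (t+1) * t⁻¹) t :=
    ((hasDerivAt_id t).add_const 1).mul (Real.hasDerivAt_log ht.ne')
  have h2 := (h1.sub ((hasDerivAt_id t).const_mul 2)).add_const 2
  refine h2.congr_deriv ?_
  field_simp [ht.ne']
  ring

private lemma hF_deriv (t : ℝ) (ht : 0 < t) :
    HasDerivAt (fun s : ℝ => 2*(s+2)*(s*Real.log s - s + 1) - 3*(s-1)^2)
      (4*((t+1) * Real.log t - 2*t + 2)) t := by
  have hl : HasDerivAt (fun s : ℝ => s * Real.log s - s + 1)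
      (1 * Real.log t + t * t⁻¹ - 1) t :=
    (((hasDerivAt_id t).mul (Real.hasDerivAt_log ht.ne')).sub (hasDerivAt_id t)).add_const 1
  have hq : HasDerivAt (fun s : ℝ => 2*(s+2)) 2 t := by
    simpa using (((hasDerivAt_id t).add_const 2).const_mul 2)
  have hc : HasDerivAt (fun s : ℝ => 3*(s-1)^2) (3*(2*(t-1))) t := by
    simpa using (((hasDerivAt_id t).sub_const 1).pow 2).const_mul 3
  have := (hq.mul hl).sub hc
  refine this.congr_deriv ?_
  field_simp [ht.ne']
  ring

private lemma keyA (t : ℝ) (ht : 0 < t) :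
    3*(t-1)^2 ≤ 2*(t+2)*(t*Real.log t - t + 1) := by
  set G : ℝ → ℝ := fun s => (s+1) * Real.log s - 2*s + 2 with hGdef
  set F : ℝ → ℝ := fun s => 2*(s+2)*(s*Real.log s - s + 1) - 3*(s-1)^2 with hFdef
  have hGd : ∀ s ∈ Set.Ioi (0:ℝ), HasDerivAt G (Real.log s + 1/s - 1) s :=
    fun s hs => hG_deriv s hs
  have hGderiv : ∀ s ∈ Set.Ioi (0:ℝ), deriv G s = Real.log s + 1/s - 1 :=
    fun s hs => (hGd s hs).deriv
  have hGnonneg : ∀ s : ℝ, 0 < s → 0 ≤ Real.log s + 1/s - 1 := by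
    intro s hs
    have := Real.log_le_sub_one_of_pos (inv_pos.2 hs)
    rw [Real.log_inv] at this
    have : -Real.log s ≤ 1/s - 1 := by rw [one_div]; linarith
    linarith
  have hGmono : MonotoneOn G (Set.Ioi 0) := by
    apply monotoneOn_of_deriv_nonneg (convex_Ioi 0)
    · exact fun s hs => (hGd s hs).differentiableAt.continuousAt.continuousWithinAt
    · rw [interior_Ioi]
      exact fun s hs => (hGd s hs).differentiableAt.differentiableWithinAt
    · rw [interior_Ioi]
      intro s hs
      rw [hGderiv s hs]
      exact hGnonneg s hs
  have hG1 : G 1 = 0 := by simp [hGdef]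
  have hFd : ∀ s ∈ Set.Ioi (0:ℝ), HasDerivAt F (4 * G s) s := fun s hs => hF_deriv s hs
  have hF1 : F 1 = 0 := by simp [hFdef]
  have hFcont : ∀ s ∈ Set.Ioi (0:ℝ), ContinuousWithinAt F (Set.Ioi 0) s :=
    fun s hs => (hFd s hs).differentiableAt.continuousAt.continuousWithinAt
  have key : 0 ≤ F t := by
    rcases le_total t 1 with h1 | h1
    · -- antitone on Ioc 0 1
      have hanti : AntitoneOn F (Set.Ioc 0 1) := by
        apply antitoneOn_of_deriv_nonpos (convex_Ioc 0 1)
        · exact fun s hs => ((hFcont s hs.1).mono Set.Ioc_subset_Ioi_self)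
        · rw [interior_Ioc]
          exact fun s hs => (hFd s hs.1).differentiableAt.differentiableWithinAt
        · rw [interior_Ioc]
          intro s hs
          rw [(hFd s hs.1).deriv]
          have : G s ≤ G 1 := hGmono hs.1 (by norm_num) hs.2.le
          rw [hG1] at this
          linarith
      have := hanti ⟨ht, h1⟩ ⟨(by norm_num : (0:ℝ) < 1), le_refl 1⟩ h1
      rw [hF1] at this
      exact this
    · have hmono : MonotoneOn F (Set.Ici 1) := by
        apply monotoneOn_of_deriv_nonneg (convex_Ici 1)
        · exact fun s hs => ((hFcont s (Set.mem_Ioi.2 (lt_of_lt_of_le one_pos hs))).mono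
            (fun u hu => Set.mem_Ioi.2 (lt_of_lt_of_le one_pos hu)))
        · rw [interior_Ici]
          exact fun s hs => (hFd s (Set.mem_Ioi.2 (lt_trans one_pos hs))).differentiableAt.differentiableWithinAt
        · rw [interior_Ici]
          intro s hs
          rw [(hFd s (Set.mem_Ioi.2 (lt_trans one_pos hs))).deriv]
          have : G 1 ≤ G s := hGmono (by norm_num) (Set.mem_Ioi.2 (lt_trans one_pos hs)) hs.le
          rw [hG1] at this
          linarith
      have := hmono (by norm_num : (1:ℝ) ∈ Set.Ici 1) h1 h1
      rw [hF1] at this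
      exact this
  simpa [hFdef, sub_nonneg] using key

private lemma keyB (x y : ℝ) (hx : 0 < x) (hy : 0 < y) :
    3*(x-y)^2 ≤ 2*(x+2*y)*(x*Real.log (x/y) - x + y) := by
  have hA := keyA (x/y) (div_pos hx hy)
  have h := mul_le_mul_of_nonneg_left hA (sq_nonneg y)
  have e1 : y^2 * (3*(x/y-1)^2) = 3*(x-y)^2 := by field_simp; try ring
  have e2 : y^2 * (2*(x/y+2)*((x/y)*Real.log (x/y) - x/y + 1))
      = 2*(x+2*y)*(x*Real.log (x/y) - x + y) := by field_simp; try ring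
  rw [e1, e2] at h
  exact h

private lemma pinsker {n : ℕ} (x y : Fin n → ℝ) (hx : ∀ k, 0 < x k) (hy : ∀ k, 0 < y k)
    (hx1 : ∑ k, x k = 1) (hy1 : ∑ k, y k = 1) :
    (∑ k, |x k - y k|)^2 ≤ 2 * ∑ k, x k * Real.log (x k / y k) := by
  have hs : ∀ k, 0 < x k + 2 * y k := fun k => by have := hx k; have := hy k; linarith
  have hCS := Finset.sq_sum_div_le_sum_sq_div Finset.univ (fun k => |x k - y k|)
      (g := fun k => x k + 2 * y k) (fun k _ => hs k)
  have hsum3 : ∑ k, (x k + 2 * y k) = 3 := by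
    rw [Finset.sum_add_distrib, ← Finset.mul_sum, hx1, hy1]; norm_num
  rw [hsum3] at hCS
  have hterm : ∀ k, |x k - y k|^2 / (x k + 2 * y k)
      ≤ (2/3) * (x k * Real.log (x k / y k) - x k + y k) := by
    intro k
    rw [sq_abs, div_le_iff₀ (hs k)]
    nlinarith [keyB (x k) (y k) (hx k) (hy k)]
  have hsumle := Finset.sum_le_sum (fun k (_ : k ∈ Finset.univ) => hterm k)
  have hsum4 : ∑ k, (2/3) * (x k * Real.log (x k / y k) - x k + y k)
      = (2/3) * ∑ k, x k * Real.log (x k / y k) := by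
    rw [← Finset.mul_sum]
    congr 1
    rw [Finset.sum_add_distrib, Finset.sum_sub_distrib, hx1, hy1]
    ring
  rw [hsum4] at hsumle
  have h1 : (∑ k, |x k - y k|)^2 / 3 ≤ (2/3) * ∑ k, x k * Real.log (x k / y k) :=
    le_trans hCS hsumle
  linarith [h1]

/-- Per-step lower bound for mirror descent on the simplex via Hölder + Pinsker. -/
theorem stmt18 (n : ℕ) (hn : 0 < n) (α : ℝ) (hα : 0 < α)
    (f : (Fin n → ℝ) → ℝ) (hf : ConvexOn ℝ Set.univ f)
    (p : ℕ → Fin n → ℝ) (g : ℕ → Fin n → ℝ)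
    (hp0 : ∀ k, p 0 k = 1 / n)
    (hmem : ∀ t, (∀ k, 0 ≤ p t k) ∧ ∑ k, p t k = 1)
    (hpos : ∀ t k, 0 < p t k)
    (hsub : ∀ t (q : Fin n → ℝ), f (p t) + ∑ k, g (t+1) k * (q k - p t k) ≤ f q)
    (hmin : ∀ t (q : Fin n → ℝ), (∀ k, 0 ≤ q k) → ∑ k, q k = 1 →
      (∑ k, g (t+1) k * (p (t+1) k - p t k))
          + α * ∑ k, p (t+1) k * Real.log (p (t+1) k / p t k)
        ≤ (∑ k, g (t+1) k * (q k - p t k))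
          + α * ∑ k, q k * Real.log (q k / p t k)) :
    ∀ t, -(Finset.univ.sup' ⟨⟨0, hn⟩, Finset.mem_univ _⟩ (fun k => |g (t+1) k|))^2 / (2*α)
      ≤ (∑ k, g (t+1) k * (p (t+1) k - p t k))
        + α * ∑ k, p (t+1) k * Real.log (p (t+1) k / p t k) := by
  intro t
  set G : ℝ := Finset.univ.sup' ⟨⟨0, hn⟩, Finset.mem_univ _⟩ (fun k => |g (t+1) k|) with hGdef
  set S : ℝ := ∑ k, |p (t+1) k - p t k| with hSdef
  set D : ℝ := ∑ k, p (t+1) k * Real.log (p (t+1) k / p t k) with hDdef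
  have hGk : ∀ k, |g (t+1) k| ≤ G := fun k =>
    Finset.le_sup' (fun k => |g (t+1) k|) (Finset.mem_univ k)
  have hG0 : 0 ≤ G := le_trans (abs_nonneg _) (hGk ⟨0, hn⟩)
  have hS0 : 0 ≤ S := Finset.sum_nonneg (fun k _ => abs_nonneg _)
  have hPin : S^2 ≤ 2 * D :=
    pinsker (p (t+1)) (p t) (hpos (t+1)) (hpos t) (hmem (t+1)).2 (hmem t).2
  have hHolder : -(G * S) ≤ ∑ k, g (t+1) k * (p (t+1) k - p t k) := by
    have h1 : |∑ k, g (t+1) k * (p (t+1) k - p t k)| ≤ G * S := by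
      calc |∑ k, g (t+1) k * (p (t+1) k - p t k)|
          ≤ ∑ k, |g (t+1) k * (p (t+1) k - p t k)| := Finset.abs_sum_le_sum_abs _ _
        _ ≤ ∑ k, G * |p (t+1) k - p t k| := by
            apply Finset.sum_le_sum
            intro k _
            rw [abs_mul]
            exact mul_le_mul_of_nonneg_right (hGk k) (abs_nonneg _)
        _ = G * S := by rw [hSdef, Finset.mul_sum]
    linarith [neg_abs_le (∑ k, g (t+1) k * (p (t+1) k - p t k))]
  have hstep : -G^2 / (2*α) ≤ -(G * S) + α * D := by
    rw [div_le_iff₀ (by linarith : (0:ℝ) < 2*α)]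
    nlinarith [sq_nonneg (α * S - G), mul_le_mul_of_nonneg_left hPin hα.le]
  linarith
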